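/- For the affine optimal control problem with quadratic cost, the horizontal space ℋ_x := 𝔽H_df(J⁻¹(0) ∩ T*_xM) defined via the drift-free optimal Hamiltonian H_df satisfies ℋ_x ∩ 𝒱_x = 0, where 𝒱_x is the tangent space to the G-orbit through x. Concretely: if ξ ∈ 𝔤 and ξ_M(x) = 𝔽H_df(α_x) for some α_x ∈ J⁻¹(0), then ξ_M(x) = 0. -/

import Mathlib

private lemma key_aux {V : Type*} [AddCommGroup V] [Module ℝ V]
    {d : ℕ} (Y : Fin d → V) (A : Matrix (Fin d) (Fin d) ℝ) (hA : A.PosDef)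
    (α : Module.Dual ℝ V) (hα : α (∑ i, ∑ j, (A i j * α (Y i)) • Y j) = 0) :
    (∑ i, ∑ j, (A i j * α (Y i)) • Y j) = 0 := by
  set c : Fin d → ℝ := fun i => α (Y i) with hc
  have hdot : dotProduct (star c) (A.mulVec c) = 0 := by
    simp only [map_sum, map_smul, smul_eq_mul] at hα
    simpa [dotProduct, Matrix.mulVec, Finset.mul_sum, mul_comm, mul_assoc,
      mul_left_comm] using hα
  have hc0 : c = 0 := by
    by_contra h
    exact absurd hdot (ne_of_gt (hA.dotProduct_mulVec_pos h))
  have : ∀ i, c i = 0 := fun i => congrFun hc0 i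
  refine Finset.sum_eq_zero fun i _ => Finset.sum_eq_zero fun j _ => ?_
  rw [show α (Y i) = c i from rfl, this i, mul_zero, zero_smul]

/-- For the affine optimal control problem with quadratic cost, the
horizontal space `ℋ_x := 𝔽H_df(J⁻¹(0) ∩ T*_xM)`, defined via the drift-free optimal
Hamiltonian `H_df`, satisfies `ℋ_x ∩ 𝒱_x = 0`, where `𝒱_x` is the tangent space to the
`G`-orbit through `x`.  Concretely: if `ξ ∈ 𝔤` and `ξ_M(x) = 𝔽H_df(α_x)` for some
`α_x ∈ J⁻¹(0)`, then `ξ_M(x) = 0`.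

Here `𝔽H_df(α_x) = g^{ij} ⟨α_x, X_i(x)⟩ X_j(x)` (summation convention) with `(g^{ij})`
the positive-definite inverse metric matrix on the control distribution, `gen x ξ = ξ_M(x)`
the infinitesimal generator, and `J⁻¹(0)` means `α (ξ_M(x)) = 0` for all `ξ ∈ 𝔤`. -/
theorem affine_horizontal_meets_vertical_trivially
    {M : Type*}
    {V : Type*} [AddCommGroup V] [Module ℝ V]
    {𝔤 : Type*} [AddCommGroup 𝔤] [Module ℝ 𝔤]
    {d : ℕ}
    (X : Fin d → M → V)
    (ginv : M → Matrix (Fin d) (Fin d) ℝ)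
    (hpos : ∀ x : M, (ginv x).PosDef)
    (gen : M → 𝔤 →ₗ[ℝ] V) :
    -- ℋ_x ∩ 𝒱_x = 0 as sets ...
    (∀ (x : M) (v : V),
      (∃ α : Module.Dual ℝ V, (∀ η : 𝔤, α (gen x η) = 0) ∧
          v = ∑ i, ∑ j, (ginv x i j * α (X i x)) • X j x) →
      (∃ ξ : 𝔤, v = gen x ξ) → v = 0) ∧
    -- ... concretely: ξ_M(x) = 𝔽H_df(α_x) with α_x ∈ J⁻¹(0) implies ξ_M(x) = 0
    (∀ (x : M) (ξ : 𝔤) (α : Module.Dual ℝ V),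
      (∀ η : 𝔤, α (gen x η) = 0) →
      gen x ξ = ∑ i, ∑ j, (ginv x i j * α (X i x)) • X j x →
      gen x ξ = 0) := by
  have key : ∀ (x : M) (ξ : 𝔤) (α : Module.Dual ℝ V),
      (∀ η : 𝔤, α (gen x η) = 0) →
      gen x ξ = ∑ i, ∑ j, (ginv x i j * α (X i x)) • X j x →
      gen x ξ = 0 := by
    intro x ξ α hJ hv
    rw [hv]
    exact key_aux (fun i => X i x) (ginv x) (hpos x) α (by rw [← hv]; exact hJ ξ)
  refine ⟨?_, key⟩
  rintro x v ⟨α, hJ, hv⟩ ⟨ξ, hξ⟩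
  rw [hξ] at hv ⊢
  exact key x ξ α hJ hv
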